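/- arXiv:1412.4146 — 3 statements merged into one kernel-verified Lean document; each statement's English description precedes it below -/
import Mathlib

section
/- (Fundamental theorem of linear inequalities.) Let v : Fin K → ℝ^m be a finite family of vectors whose span is all of ℝ^m, and let u ∈ ℝ^m. Then exactly one of the following two statements holds: (i) u lies in the conical hull of {v_k}, i.e. u = Σ_k c_k · v_k for some nonnegative reals c_k; (ii) there exists a vector n ∈ ℝ^m and a subset s of indices of cardinality m − 1 such that the family (v_k)_{k ∈ s} is linearly independent, ⟪n, v_k⟫ = 0 for all k ∈ s, ⟪n, u⟫ > 0, and ⟪n, v_k⟫ ≤ 0 for all k. -/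
open Finset Submodule Set
open scoped RealInnerProductSpace


lemma ext_sum {K : ℕ} {E : Type*} [AddCommGroup E] [Module ℝ E] (v : Fin K → E)
    (c : Fin K → ℝ) (g : {k // c k ≠ 0} → ℝ) :
    ∑ k, (if h : c k ≠ 0 then g ⟨k, h⟩ else 0) • v k = ∑ x : {k // c k ≠ 0}, g x • v x := by
  rw [← Finset.sum_filter_of_ne (p := fun k => c k ≠ 0)
    (f := fun k => (if h : c k ≠ 0 then g ⟨k, h⟩ else 0) • v k)
    (by intro x _ hx h0; exact hx (by simp [h0]))]
  rw [Finset.sum_subtype (p := fun k => c k ≠ 0) _ (by simp)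
    (fun k => (if h : c k ≠ 0 then g ⟨k, h⟩ else 0) • v k)]
  apply Finset.sum_congr rfl
  intro x _
  simp [x.2]

lemma cone_cara {K : ℕ} {E : Type*} [AddCommGroup E] [Module ℝ E] (v : Fin K → E) :
    ∀ (N : ℕ) (c : Fin K → ℝ), (Finset.univ.filter fun k => c k ≠ 0).card ≤ N →
      (∀ k, 0 ≤ c k) →
      ∃ c' : Fin K → ℝ, (∀ k, 0 ≤ c' k) ∧ (∑ k, c' k • v k = ∑ k, c k • v k) ∧
        LinearIndependent ℝ (fun k : {k // c' k ≠ 0} => v k) := by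
  intro N
  induction N with
  | zero =>
    intro c hcard hc
    refine ⟨c, hc, rfl, ?_⟩
    have hempty : IsEmpty {k // c k ≠ 0} := by
      constructor
      rintro ⟨k, hk⟩
      have : k ∈ Finset.univ.filter fun k => c k ≠ 0 := by simp [hk]
      have := Finset.card_pos.mpr ⟨k, this⟩
      omega
    exact linearIndependent_empty_type
  | succ N ih =>
    intro c hcard hc
    by_cases hli : LinearIndependent ℝ (fun k : {k // c k ≠ 0} => v k)
    · exact ⟨c, hc, rfl, hli⟩
    obtain ⟨g, hgsum, i, hgi⟩ := Fintype.not_linearIndependent_iff.mp hli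
    -- extend g to a relation d on Fin K, with a positive entry
    obtain ⟨d, hdsum, hdzero, k1, hk1⟩ : ∃ d : Fin K → ℝ, (∑ k, d k • v k = 0) ∧
        (∀ k, c k = 0 → d k = 0) ∧ ∃ k, 0 < d k := by
      rcases hgi.lt_or_gt with hneg | hpos
      · refine ⟨fun k => if h : c k ≠ 0 then -g ⟨k, h⟩ else 0, ?_, ?_, ⟨i.1, ?_⟩⟩
        · rw [ext_sum v c (fun x => -g x)]
          simp only [neg_smul, Finset.sum_neg_distrib, hgsum, neg_zero]
        · intro k hk; simp [hk]
        · simp only [ne_eq, i.2, not_false_eq_true, dif_pos, neg_pos, Subtype.coe_eta]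
          exact hneg
      · refine ⟨fun k => if h : c k ≠ 0 then g ⟨k, h⟩ else 0, ?_, ?_, ⟨i.1, ?_⟩⟩
        · rw [ext_sum v c g]; exact hgsum
        · intro k hk; simp [hk]
        · simp only [ne_eq, i.2, not_false_eq_true, dif_pos, Subtype.coe_eta]
          exact hpos
    -- pick the index minimizing c k / d k among positive d k
    have hPne : (Finset.univ.filter fun k => 0 < d k).Nonempty := ⟨k1, by simp [hk1]⟩
    obtain ⟨k0, hk0mem, hk0min⟩ :=
      Finset.exists_min_image _ (fun k => c k / d k) hPne
    simp only [Finset.mem_filter, Finset.mem_univ, true_and] at hk0mem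
    set t := c k0 / d k0 with ht
    have ht0 : 0 ≤ t := div_nonneg (hc k0) hk0mem.le
    set c' : Fin K → ℝ := fun k => c k - t * d k with hc'
    have hc'nonneg : ∀ k, 0 ≤ c' k := by
      intro k
      rcases le_or_gt (d k) 0 with hdk | hdk
      · have : t * d k ≤ 0 := mul_nonpos_of_nonneg_of_nonpos ht0 hdk
        simp only [hc', sub_nonneg]; linarith [hc k]
      · have hmin := hk0min k (by simp [hdk])
        have : t * d k ≤ c k := by
          rw [ht]
          calc c k0 / d k0 * d k ≤ c k / d k * d k := by
                apply mul_le_mul_of_nonneg_right hmin hdk.le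
            _ = c k := div_mul_cancel₀ _ hdk.ne'
        simp only [hc', sub_nonneg]; exact this
    have hsum : ∑ k, c' k • v k = ∑ k, c k • v k := by
      simp only [hc', sub_smul, Finset.sum_sub_distrib, mul_smul, ← Finset.smul_sum, hdsum,
        smul_zero, sub_zero]
    have hck0 : c k0 ≠ 0 := fun h => by
      have := hdzero k0 h; exact hk0mem.ne' this
    have hc'k0 : c' k0 = 0 := by
      simp only [hc', ht]
      field_simp
      ring
    have hsubset : (Finset.univ.filter fun k => c' k ≠ 0) ⊆
        (Finset.univ.filter fun k => c k ≠ 0).erase k0 := by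
      intro k hk
      simp only [Finset.mem_filter, Finset.mem_univ, true_and] at hk
      rw [Finset.mem_erase]
      constructor
      · rintro rfl; exact hk hc'k0
      · simp only [Finset.mem_filter, Finset.mem_univ, true_and]
        intro h0
        exact hk (by simp [hc', h0, hdzero k h0])
    have hcard' : (Finset.univ.filter fun k => c' k ≠ 0).card ≤ N := by
      have h1 := Finset.card_le_card hsubset
      have h2 : k0 ∈ Finset.univ.filter fun k => c k ≠ 0 := by simp [hck0]
      have h3 := Finset.card_erase_of_mem h2
      omega
    obtain ⟨c'', h1, h2, h3⟩ := ih c' hcard' hc'nonneg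
    exact ⟨c'', h1, h2.trans hsum, h3⟩

lemma cone_isClosed {K : ℕ} {E : Type*} [NormedAddCommGroup E] [NormedSpace ℝ E]
    [FiniteDimensional ℝ E] (v : Fin K → E) :
    IsClosed {x : E | ∃ c : Fin K → ℝ, (∀ k, 0 ≤ c k) ∧ x = ∑ k, c k • v k} := by
  classical
  -- the linear "combination" map for a subset σ
  let T : (σ : Finset (Fin K)) → ({k // k ∈ σ} → ℝ) →ₗ[ℝ] E := fun σ =>
    { toFun := fun c => ∑ k : {k // k ∈ σ}, c k • v k
      map_add' := by
        intro a b
        simp [add_smul, Finset.sum_add_distrib]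
      map_smul' := by
        intro r a
        simp [smul_smul, Finset.smul_sum] }
  have key : {x : E | ∃ c : Fin K → ℝ, (∀ k, 0 ≤ c k) ∧ x = ∑ k, c k • v k} =
      ⋃ (σ : Finset (Fin K)) (_ : LinearIndependent ℝ (fun k : {k // k ∈ σ} => v k)),
        T σ '' {c | ∀ k, 0 ≤ c k} := by
    ext x
    simp only [Set.mem_setOf_eq, Set.mem_iUnion, Set.mem_image]
    constructor
    · rintro ⟨c, hc, rfl⟩
      obtain ⟨c', hc'0, hc'sum, hc'li⟩ := cone_cara v _ c le_rfl hc
      refine ⟨Finset.univ.filter fun k => c' k ≠ 0, ?_, fun k => c' k.1, fun k => hc'0 _, ?_⟩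
      · -- transfer linear independence between the two subtypes
        exact hc'li.comp
          (fun k : {k // k ∈ Finset.univ.filter fun k => c' k ≠ 0} =>
            (⟨k.1, (Finset.mem_filter.mp k.2).2⟩ : {k // c' k ≠ 0}))
          (fun a b hab => Subtype.ext (congrArg (fun x : {k // c' k ≠ 0} => x.val) hab))
      · -- sums agree
        rw [← hc'sum]
        show ∑ k : {k // k ∈ Finset.univ.filter fun k => c' k ≠ 0}, c' k.1 • v k.1 = _
        rw [← Finset.sum_filter_of_ne (p := fun k => c' k ≠ 0)
          (f := fun k => c' k • v k) (by intro y _ hy h0; exact hy (by simp [h0]))]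
        rw [Finset.sum_subtype (p := fun k => k ∈ Finset.univ.filter fun k => c' k ≠ 0) _
          (by simp) (fun k => c' k • v k)]
    · rintro ⟨σ, hσ, c, hc0, rfl⟩
      refine ⟨fun k => if h : k ∈ σ then c ⟨k, h⟩ else 0, ?_, ?_⟩
      · intro k
        by_cases h : k ∈ σ <;> simp [h, hc0 _]
      · show T σ c = _
        rw [← Finset.sum_filter_of_ne (p := fun k => k ∈ σ)
          (f := fun k => (if h : k ∈ σ then c ⟨k, h⟩ else 0) • v k)
          (by intro y _ hy; by_contra h0; exact hy (by simp [h0]))]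
        rw [Finset.sum_subtype (p := fun k => k ∈ σ) _ (by simp)
          (fun k => (if h : k ∈ σ then c ⟨k, h⟩ else 0) • v k)]
        show _ = ∑ k : {k // k ∈ σ}, _
        apply Finset.sum_congr rfl
        intro k _
        simp [k.2]
  rw [key]
  apply isClosed_iUnion_of_finite
  intro σ
  apply isClosed_iUnion_of_finite
  intro hσ
  -- T σ is injective hence a closed embedding
  have hker : LinearMap.ker (T σ) = ⊥ := by
    rw [LinearMap.ker_eq_bot']
    intro c hc
    exact funext fun k => Fintype.linearIndependent_iff.mp hσ c hc k
  have hemb := (T σ).isClosedEmbedding_of_injective hker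
  apply hemb.isClosedMap
  have : {c : {k // k ∈ σ} → ℝ | ∀ k, 0 ≤ c k} = ⋂ k, {c | 0 ≤ c k} := by
    ext c; simp [Set.mem_iInter]
  rw [this]
  exact isClosed_iInter fun k => isClosed_le continuous_const (continuous_apply k)

lemma farkas {m K : ℕ} (v : Fin K → EuclideanSpace ℝ (Fin m)) (u : EuclideanSpace ℝ (Fin m))
    (hu : ¬ ∃ c : Fin K → ℝ, (∀ k, 0 ≤ c k) ∧ u = ∑ k, (c k • v k)) :
    ∃ n : EuclideanSpace ℝ (Fin m), (∀ k, ⟪n, v k⟫ ≤ 0) ∧ 0 < ⟪n, u⟫ := by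
  set C : ConvexCone ℝ (EuclideanSpace ℝ (Fin m)) :=
    { carrier := {x | ∃ c : Fin K → ℝ, (∀ k, 0 ≤ c k) ∧ x = ∑ k, c k • v k}
      smul_mem' := by
        rintro r hr x ⟨c, hc, rfl⟩
        exact ⟨fun k => r • c k, fun k => mul_nonneg hr.le (hc k), by
          simp [Finset.smul_sum, smul_smul]⟩
      add_mem' := by
        rintro x ⟨c, hc, rfl⟩ y ⟨c', hc', rfl⟩
        exact ⟨c + c', fun k => add_nonneg (hc k) (hc' k), by
          simp [add_smul, Finset.sum_add_distrib]⟩ } with hC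
  have hne : (C : Set (EuclideanSpace ℝ (Fin m))).Nonempty :=
    ⟨0, ⟨0, fun k => le_rfl, by simp⟩⟩
  have hclosed : IsClosed (C : Set (EuclideanSpace ℝ (Fin m))) := cone_isClosed v
  have hnotmem : u ∉ C := fun h => hu h
  have hpt : C.Pointed := show (0 : EuclideanSpace ℝ (Fin m)) ∈ C from ⟨0, fun k => le_rfl, by simp⟩
  obtain ⟨y, hy1, hy2⟩ :=
    ProperCone.hyperplane_separation'
      (⟨C.toPointedCone hpt, hclosed⟩ : ProperCone ℝ (EuclideanSpace ℝ (Fin m))) (x₀ := u) hnotmem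
  refine ⟨-y, fun k => ?_, ?_⟩
  · have hvk : v k ∈ C := by
      refine ⟨fun j => if j = k then 1 else 0, fun j => by positivity, ?_⟩
      simp [ite_smul]
    have := hy1 _ hvk
    rw [inner_neg_left, real_inner_comm]
    linarith
  · rw [inner_neg_left, real_inner_comm]
    linarith

lemma key {m K : ℕ} (v : Fin K → EuclideanSpace ℝ (Fin m))
    (hspan : Submodule.span ℝ (Set.range v) = ⊤) (u : EuclideanSpace ℝ (Fin m)) :
    (∃ c : Fin K → ℝ, (∀ k, 0 ≤ c k) ∧ u = ∑ k, c k • v k) ∨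
    (∃ (n : EuclideanSpace ℝ (Fin m)) (s : Finset (Fin K)), s.card = m - 1 ∧
      LinearIndependent ℝ (fun k : {k // k ∈ s} => v k) ∧
      (∀ k ∈ s, ⟪n, v k⟫ = 0) ∧ 0 < ⟪n, u⟫ ∧ ∀ k, ⟪n, v k⟫ ≤ 0) := by
  classical
  by_cases hmem : ∃ c : Fin K → ℝ, (∀ k, 0 ≤ c k) ∧ u = ∑ k, c k • v k
  · exact Or.inl hmem
  right
  obtain ⟨n0, hn0, hn0u⟩ := farkas v u hmem
  have hfr : Module.finrank ℝ (EuclideanSpace ℝ (Fin m)) = m := finrank_euclideanSpace_fin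
  let d : EuclideanSpace ℝ (Fin m) → ℕ := fun n => Module.finrank ℝ (span ℝ (v '' {k | ⟪n, v k⟫ = 0}))
  let Nset : Set (EuclideanSpace ℝ (Fin m)) := {n | (∀ k, ⟪n, v k⟫ ≤ 0) ∧ ⟪n, u⟫ = 1}
  have hNne : Nset.Nonempty := by
    refine ⟨(⟪n0, u⟫)⁻¹ • n0, fun k => ?_, ?_⟩
    · rw [real_inner_smul_left]
      exact mul_nonpos_of_nonneg_of_nonpos (inv_nonneg.mpr hn0u.le) (hn0 k)
    · rw [real_inner_smul_left]
      exact inv_mul_cancel₀ hn0u.ne'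
  -- pick n in Nset maximizing d
  have hDne : (d '' Nset).Nonempty := hNne.image d
  have hDbdd : BddAbove (d '' Nset) := by
    refine ⟨m, ?_⟩
    rintro r ⟨n, -, rfl⟩
    have h2 := (span ℝ (v '' {k | ⟪n, v k⟫ = 0})).finrank_le
    rw [hfr] at h2
    exact h2
  obtain ⟨n, hnN, hnd⟩ : ∃ n ∈ Nset, d n = sSup (d '' Nset) := by
    obtain ⟨n, hn, hd⟩ := Nat.sSup_mem hDne hDbdd
    exact ⟨n, hn, hd⟩
  have hmax : ∀ n' ∈ Nset, d n' ≤ d n := fun n' hn' =>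
    hnd ▸ le_csSup hDbdd ⟨n', hn', rfl⟩
  set Z := {k | ⟪n, v k⟫ = 0} with hZ
  set W := span ℝ (v '' Z) with hW
  have hWn : ∀ x ∈ W, ⟪n, x⟫ = 0 := by
    intro x hx
    have hle : W ≤ LinearMap.ker (innerSL ℝ n).toLinearMap := by
      rw [hW, Submodule.span_le]
      rintro y ⟨k, hk, rfl⟩
      simpa [hZ] using hk
    simpa using hle hx
  have hWtop : W ≠ ⊤ := by
    intro h
    have hn0' : ⟪n, n⟫ = 0 := hWn n (h ▸ Submodule.mem_top)
    rw [inner_self_eq_zero] at hn0'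
    rw [hn0'] at hnN
    simpa using hnN.2
  have hWlt : Module.finrank ℝ W < m := by
    have h2 := Submodule.finrank_lt (K := ℝ) hWtop
    rwa [hfr] at h2
  -- main dichotomy on d n
  rcases eq_or_lt_of_le (Nat.le_sub_one_of_lt hWlt : d n ≤ m - 1) with hdn | hdn
  · -- construct the finset s
    obtain ⟨b, hbsub, hbspan, hbli⟩ := exists_linearIndependent ℝ (v '' Z)
    have hbfin : b.Finite := (Set.finite_range v).subset (hbsub.trans (Set.image_subset_range v Z))
    have : Fintype b := hbfin.fintype
    have hbcard : b.toFinset.card = m - 1 := by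
      have h1 : Module.finrank ℝ (span ℝ b) = b.toFinset.card := finrank_span_set_eq_card hbli
      rw [hbspan] at h1
      rw [← h1]
      exact hdn
    choose g hgZ hgv using fun x : b => (Set.mem_image _ _ _).mp (hbsub x.2)
    have ginj : Function.Injective g := by
      intro x y hxy
      apply Subtype.ext
      rw [← hgv x, ← hgv y, hxy]
    refine ⟨n, Finset.image g Finset.univ, ?_, ?_, ?_, ?_, hnN.1⟩
    · rw [Finset.card_image_of_injective _ ginj, Finset.card_univ, ← Set.toFinset_card, hbcard]
    · -- linear independence
      have hvb : ∀ k (h : k ∈ Finset.image g Finset.univ), v k ∈ b := by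
        intro k h
        obtain ⟨x, -, rfl⟩ := Finset.mem_image.mp h
        rw [hgv x]
        exact x.2
      have hvinj : ∀ k k' (h : k ∈ Finset.image g Finset.univ)
          (h' : k' ∈ Finset.image g Finset.univ), v k = v k' → k = k' := by
        intro k k' h h' hvv
        obtain ⟨x, -, rfl⟩ := Finset.mem_image.mp h
        obtain ⟨y, -, rfl⟩ := Finset.mem_image.mp h'
        apply congrArg g
        apply Subtype.ext
        rw [← hgv x, ← hgv y, hvv]
      exact hbli.comp
        (fun k : {k // k ∈ Finset.image g Finset.univ} => (⟨v k.1, hvb k.1 k.2⟩ : b))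
        (fun p q hpq => Subtype.ext (hvinj _ _ p.2 q.2 (congrArg (fun x : b => x.val) hpq)))
    · intro k hk
      obtain ⟨x, -, rfl⟩ := Finset.mem_image.mp hk
      exact hgZ x
    · rw [hnN.2]; norm_num
  · -- contradiction with maximality
    exfalso
    set W' := W ⊔ span ℝ {u} with hW'
    have hW'fr : Module.finrank ℝ W' < m := by
      have h1 := Submodule.finrank_add_le_finrank_add_finrank W (span ℝ {u})
      rw [← hW'] at h1
      have h2 : Module.finrank ℝ (span ℝ ({u} : Set (EuclideanSpace ℝ (Fin m)))) ≤ 1 := by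
        have := finrank_span_le_card (R := ℝ) ({u} : Set (EuclideanSpace ℝ (Fin m)))
        simpa using this
      have h3 : Module.finrank ℝ W < m - 1 := hdn
      omega
    have hW'top : W' ≠ ⊤ := by
      intro h
      rw [h, finrank_top, hfr] at hW'fr
      omega
    have hperp : W'ᗮ ≠ ⊥ := fun h => hW'top (Submodule.orthogonal_eq_bot_iff.mp h)
    obtain ⟨w0, hw0mem, hw0ne⟩ := Submodule.exists_mem_ne_zero_of_ne_bot hperp
    have hw0u : ⟪w0, u⟫ = 0 := by
      have hu' : u ∈ W' := Submodule.mem_sup_right (Submodule.mem_span_singleton_self u)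
      rw [real_inner_comm]
      exact (Submodule.mem_orthogonal _ _).mp hw0mem u hu'
    have hw0W : ∀ x ∈ W, ⟪w0, x⟫ = 0 := by
      intro x hx
      rw [real_inner_comm]
      exact (Submodule.mem_orthogonal _ _).mp hw0mem x (Submodule.mem_sup_left hx)
    have hj0 : ∃ j, ⟪w0, v j⟫ ≠ 0 := by
      by_contra h
      push_neg at h
      apply hw0ne
      rw [← inner_self_eq_zero (𝕜 := ℝ) (x := w0)]
      have hle : span ℝ (Set.range v) ≤ LinearMap.ker (innerSL ℝ w0).toLinearMap := by
        rw [Submodule.span_le]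
        rintro y ⟨k, rfl⟩
        simpa using h k
      rw [hspan] at hle
      simpa using hle (Submodule.mem_top (x := w0))
    obtain ⟨w, hwu, hwW, j, hwj⟩ : ∃ w : EuclideanSpace ℝ (Fin m), ⟪w, u⟫ = 0 ∧
        (∀ x ∈ W, ⟪w, x⟫ = 0) ∧ ∃ j, 0 < ⟪w, v j⟫ := by
      obtain ⟨j, hj⟩ := hj0
      rcases hj.lt_or_gt with h | h
      · exact ⟨-w0, by simp [inner_neg_left, hw0u], fun x hx => by
          simp [inner_neg_left, hw0W x hx], j, by simpa [inner_neg_left] using h⟩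
      · exact ⟨w0, hw0u, hw0W, j, h⟩
    have hPne : (Finset.univ.filter fun k => 0 < ⟪w, v k⟫).Nonempty := ⟨j, Finset.mem_filter.mpr ⟨Finset.mem_univ _, hwj⟩⟩
    obtain ⟨k0, hk0P, hk0min⟩ :=
      Finset.exists_min_image _ (fun k => -⟪n, v k⟫ / ⟪w, v k⟫) hPne
    simp only [Finset.mem_filter, Finset.mem_univ, true_and] at hk0P
    have hnk0 : ⟪n, v k0⟫ < 0 := by
      rcases (hnN.1 k0).lt_or_eq with h | h
      · exact h
      · exfalso
        have : v k0 ∈ W := Submodule.subset_span ⟨k0, h, rfl⟩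
        exact hk0P.ne' (hwW _ this)
    set t := -⟪n, v k0⟫ / ⟪w, v k0⟫ with htdef
    have ht : 0 < t := div_pos (by linarith) hk0P
    set n' := n + t • w with hn'def
    have hn'k : ∀ x : EuclideanSpace ℝ (Fin m), ⟪n', x⟫ = ⟪n, x⟫ + t * ⟪w, x⟫ := by
      intro x
      rw [hn'def, inner_add_left, real_inner_smul_left]
    have hn'N : n' ∈ Nset := by
      constructor
      · intro k
        rw [hn'k]
        rcases le_or_gt ⟪w, v k⟫ 0 with h | h
        · have h1 : t * ⟪w, v k⟫ ≤ 0 := mul_nonpos_of_nonneg_of_nonpos ht.le h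
          have h2 := hnN.1 k
          linarith
        · have hmin := hk0min k (Finset.mem_filter.mpr ⟨Finset.mem_univ _, h⟩)
          have h1 : t * ⟪w, v k⟫ ≤ -⟪n, v k⟫ := by
            rw [← le_div_iff₀ h]
            exact hmin
          linarith
      · rw [hn'k, hwu, hnN.2]
        ring
    have hk0Z' : ⟪n', v k0⟫ = 0 := by
      rw [hn'k, htdef, div_mul_cancel₀ _ hk0P.ne']
      ring
    have hsub : W ≤ span ℝ (v '' {k | ⟪n', v k⟫ = 0}) := by
      rw [hW]
      apply Submodule.span_mono
      apply Set.image_mono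
      intro k hk
      have hvkW : v k ∈ W := Submodule.subset_span ⟨k, hk, rfl⟩
      show ⟪n', v k⟫ = 0
      rw [hn'k, hwW _ hvkW, hk]
      ring
    have hvk0 : v k0 ∉ W := fun h => hk0P.ne' (hwW _ h)
    have hlt : W < span ℝ (v '' {k | ⟪n', v k⟫ = 0}) := by
      apply lt_of_le_of_ne hsub
      intro heq
      exact hvk0 (heq ▸ Submodule.subset_span ⟨k0, hk0Z', rfl⟩)
    have hfin := Submodule.finrank_lt_finrank_of_lt hlt
    have hd1 : d n = Module.finrank ℝ W := rfl
    have hd2 : d n' = Module.finrank ℝ (span ℝ (v '' {k | ⟪n', v k⟫ = 0})) := rfl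
    have := hmax n' hn'N
    omega

/-- Fundamental theorem of linear inequalities: for a finite family `v` spanning `ℝ^m` and a
vector `u`, exactly one of the following holds: (i) `u` lies in the conical hull of the `v k`;
(ii) there is a hyperplane with normal `n` containing `m - 1` linearly independent vectors
among the `v k`, with `⟪n, u⟫ > 0` and `⟪n, v k⟫ ≤ 0` for all `k`. -/
theorem stmt_10 {m K : ℕ} (v : Fin K → Fin m → ℝ)
    (hspan : Submodule.span ℝ (Set.range v) = ⊤) (u : Fin m → ℝ) :
    Xor'
      (∃ c : Fin K → ℝ, (∀ k, 0 ≤ c k) ∧ u = ∑ k, c k • v k)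
      (∃ (n : Fin m → ℝ) (s : Finset (Fin K)), s.card = m - 1 ∧
        LinearIndependent ℝ (fun k : {k // k ∈ s} => v k) ∧
        (∀ k ∈ s, dotProduct n (v k) = 0) ∧
        0 < dotProduct n u ∧
        ∀ k, dotProduct n (v k) ≤ 0) := by
  classical
  set eL := WithLp.linearEquiv 2 ℝ (Fin m → ℝ) with heL
  set v' : Fin K → EuclideanSpace ℝ (Fin m) := fun k => eL.symm (v k) with hv'
  set u' : EuclideanSpace ℝ (Fin m) := eL.symm u with hu'
  have hinner : ∀ a b : EuclideanSpace ℝ (Fin m),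
      ⟪a, b⟫ = dotProduct (eL a) (eL b) := by
    intro a b
    simp only [PiLp.inner_apply, RCLike.inner_apply, starRingEnd_apply, star_trivial,
      dotProduct]
    exact Finset.sum_congr rfl fun i _ => mul_comm _ _
  have hspan' : Submodule.span ℝ (Set.range v') = ⊤ := by
    have h1 : Set.range v' = eL.symm '' Set.range v := by
      rw [← Set.range_comp]; rfl
    rw [h1, ← LinearEquiv.coe_coe, ← Submodule.map_span, hspan, Submodule.map_top]
    exact LinearEquiv.range _
  -- equivalence of the two "membership" statements
  have hmemiff : (∃ c : Fin K → ℝ, (∀ k, 0 ≤ c k) ∧ u' = ∑ k, c k • v' k) ↔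
      (∃ c : Fin K → ℝ, (∀ k, 0 ≤ c k) ∧ u = ∑ k, c k • v k) := by
    constructor
    · rintro ⟨c, hc, h⟩
      refine ⟨c, hc, ?_⟩
      have := congrArg eL h
      simpa [map_sum, hu', hv'] using this
    · rintro ⟨c, hc, h⟩
      refine ⟨c, hc, ?_⟩
      have := congrArg eL.symm h
      simpa [map_sum] using this
  -- the two statements are mutually exclusive
  have hnotboth : ¬ ((∃ c : Fin K → ℝ, (∀ k, 0 ≤ c k) ∧ u = ∑ k, c k • v k) ∧
      (∃ (n : Fin m → ℝ) (s : Finset (Fin K)), s.card = m - 1 ∧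
        LinearIndependent ℝ (fun k : {k // k ∈ s} => v k) ∧
        (∀ k ∈ s, dotProduct n (v k) = 0) ∧
        0 < dotProduct n u ∧
        ∀ k, dotProduct n (v k) ≤ 0)) := by
    rintro ⟨⟨c, hc, rfl⟩, ⟨n, s, -, -, -, hpos, hneg⟩⟩
    have : dotProduct n (∑ k, c k • v k) = ∑ k, c k * dotProduct n (v k) := by
      simp only [dotProduct, Finset.sum_apply, Pi.smul_apply, smul_eq_mul,
        Finset.mul_sum]
      rw [Finset.sum_comm]
      exact Finset.sum_congr rfl fun k _ => Finset.sum_congr rfl fun i _ => by ring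
    rw [this] at hpos
    have : ∑ k, c k * dotProduct n (v k) ≤ 0 :=
      Finset.sum_nonpos fun k _ => mul_nonpos_of_nonneg_of_nonpos (hc k) (hneg k)
    linarith
  rcases key v' hspan' u' with h | h
  · left
    refine ⟨hmemiff.mp h, fun h2 => hnotboth ⟨hmemiff.mp h, h2⟩⟩
  · right
    obtain ⟨n, s, hcard, hli, hzero, hpos, hneg⟩ := h
    have hmain : ∃ (n : Fin m → ℝ) (s : Finset (Fin K)), s.card = m - 1 ∧
        LinearIndependent ℝ (fun k : {k // k ∈ s} => v k) ∧
        (∀ k ∈ s, dotProduct n (v k) = 0) ∧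
        0 < dotProduct n u ∧
        ∀ k, dotProduct n (v k) ≤ 0 := by
      refine ⟨eL n, s, hcard, ?_, ?_, ?_, ?_⟩
      · have := hli.map' eL.toLinearMap eL.ker
        simpa [Function.comp_def, hv'] using this
      · intro k hk
        have := hzero k hk
        rwa [hinner] at this
      · have := hpos
        rwa [hinner] at this
      · intro k
        have := hneg k
        rwa [hinner] at this
    exact ⟨hmain, fun h1 => hnotboth ⟨h1, hmain⟩⟩
end

section
/- Let v : Fin K → ℝ^m be a finite family of vectors whose span is all of ℝ^m. Then the conical hull cone({v_k}) equals all of ℝ^m if and only if for every vector n ∈ ℝ^m such that there exists a subset s of indices of cardinality m − 1 with (v_k)_{k ∈ s} linearly independent and ⟪n, v_k⟫ = 0 for all k ∈ s and n ≠ 0, the family of numbers (⟪n, v_k⟫)_{k} is neither all nonpositive nor all nonnegative, i.e. there exist indices k₁, k₂ with ⟪n, v_{k₁}⟫ > 0 and ⟪n, v_{k₂}⟫ < 0. -/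
open Matrix Finset Submodule
open Matrix Finset Submodule


lemma farkas_aux : ∀ (K : ℕ) {m : ℕ} (v : Fin K → Fin m → ℝ) (u : Fin m → ℝ),
    (∃ c : Fin K → ℝ, (∀ k, 0 ≤ c k) ∧ u = ∑ k, c k • v k) ∨
    (∃ n : Fin m → ℝ, (∀ k, n ⬝ᵥ v k ≤ 0) ∧ 0 < n ⬝ᵥ u) := by
  intro K
  induction K with
  | zero =>
    intro m v u
    by_cases hu : u = 0
    · exact Or.inl ⟨0, fun k => le_refl 0, by simp [hu]⟩
    · refine Or.inr ⟨u, fun k => k.elim0, ?_⟩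
      have h0 : 0 ≤ u ⬝ᵥ u := Finset.sum_nonneg fun _ _ => mul_self_nonneg _
      rcases h0.lt_or_eq with h | h
      · exact h
      · exact absurd (dotProduct_self_eq_zero.mp h.symm) hu
  | succ K ih =>
    intro m v u
    set v' : Fin K → Fin m → ℝ := fun k => v k.castSucc with hv'
    set w : Fin m → ℝ := v (Fin.last K) with hw
    rcases ih v' u with ⟨c, hc, hcu⟩ | ⟨n, hn, hnu⟩
    · refine Or.inl ⟨Fin.snoc c 0, ?_, ?_⟩
      · intro k
        induction k using Fin.lastCases with
        | last => simp
        | cast k => simp [hc k]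
      · rw [Fin.sum_univ_castSucc]
        simp [hcu]
        rfl
    · rcases le_or_gt (n ⬝ᵥ w) 0 with hle | hα
      · refine Or.inr ⟨n, ?_, hnu⟩
        intro k
        induction k using Fin.lastCases with
        | last => exact hle
        | cast k => exact hn k
      · set α := n ⬝ᵥ w with hαdef
        set u' : Fin m → ℝ := u - ((n ⬝ᵥ u)/α) • w with hu'
        set v'' : Fin K → Fin m → ℝ := fun k => v' k - ((n ⬝ᵥ v' k)/α) • w with hv''
        rcases ih v'' u' with ⟨c, hc, hcu⟩ | ⟨n', hn', hn'u⟩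
        · set c₀ : ℝ := (n ⬝ᵥ u)/α - ∑ k, c k * ((n ⬝ᵥ v' k)/α) with hc₀
          have hc₀pos : 0 ≤ c₀ := by
            have h1 : 0 < (n ⬝ᵥ u)/α := div_pos hnu hα
            have h2 : ∑ k, c k * ((n ⬝ᵥ v' k)/α) ≤ 0 :=
              Finset.sum_nonpos fun k _ =>
                mul_nonpos_of_nonneg_of_nonpos (hc k) (div_nonpos_of_nonpos_of_nonneg (hn k) hα.le)
            rw [hc₀]; linarith
          refine Or.inl ⟨Fin.snoc c c₀, ?_, ?_⟩
          · intro k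
            induction k using Fin.lastCases with
            | last => simpa using hc₀pos
            | cast k => simp [hc k]
          · rw [Fin.sum_univ_castSucc]
            simp only [Fin.snoc_castSucc, Fin.snoc_last]
            have : u = ∑ k, c k • v'' k + ((n ⬝ᵥ u)/α) • w := by
              rw [← hcu]; simp [hu']
            rw [this]
            have hexp : ∀ k : Fin K, c k • v'' k = c k • v' k - (c k * ((n ⬝ᵥ v' k)/α)) • w := by
              intro k; simp [hv'', smul_sub, smul_smul]
            simp only [hexp, Finset.sum_sub_distrib]
            rw [← Finset.sum_smul]
            rw [hc₀, sub_smul]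
            abel
        · refine Or.inr ⟨n' - ((n' ⬝ᵥ w)/α) • n, ?_, ?_⟩
          · intro k
            induction k using Fin.lastCases with
            | last =>
              have : (n' - ((n' ⬝ᵥ w)/α) • n) ⬝ᵥ w = n' ⬝ᵥ w - ((n' ⬝ᵥ w)/α) * α := by
                simp [sub_dotProduct, smul_dotProduct, smul_eq_mul]
                exact Or.inl hαdef.symm
              rw [show v (Fin.last K) = w from rfl, this, div_mul_cancel₀ _ hα.ne']
              simp
            | cast k =>
              have h1 : n' ⬝ᵥ v'' k ≤ 0 := hn' k
              have : (n' - ((n' ⬝ᵥ w)/α) • n) ⬝ᵥ v k.castSucc = n' ⬝ᵥ v'' k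
                  + ((n ⬝ᵥ v' k)/α) * (n' ⬝ᵥ w) - ((n' ⬝ᵥ w)/α) * (n ⬝ᵥ v' k) := by
                simp [hv'', sub_dotProduct, dotProduct_sub,
                  smul_dotProduct, dotProduct_smul, smul_eq_mul, hv']
                try ring
              rw [show v k.castSucc = v' k from rfl] at this ⊢
              rw [this]
              have : ((n ⬝ᵥ v' k)/α) * (n' ⬝ᵥ w) - ((n' ⬝ᵥ w)/α) * (n ⬝ᵥ v' k) = 0 := by
                field_simp; ring
              linarith
          · have : (n' - ((n' ⬝ᵥ w)/α) • n) ⬝ᵥ u = n' ⬝ᵥ u' + ((n ⬝ᵥ u)/α) * (n' ⬝ᵥ w)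
                - ((n' ⬝ᵥ w)/α) * (n ⬝ᵥ u) := by
              simp [hu', sub_dotProduct, dotProduct_sub,
                smul_dotProduct, dotProduct_smul, smul_eq_mul]
              try ring
            rw [this]
            have h0 : ((n ⬝ᵥ u)/α) * (n' ⬝ᵥ w) - ((n' ⬝ᵥ w)/α) * (n ⬝ᵥ u) = 0 := by
              field_simp; ring
            linarith


/-- dot product with fixed left argument, as a linear map in the right argument. -/
noncomputable def dotR {m : ℕ} (w : Fin m → ℝ) : (Fin m → ℝ) →ₗ[ℝ] ℝ where
  toFun x := w ⬝ᵥ x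
  map_add' a b := dotProduct_add w a b
  map_smul' c a := dotProduct_smul c w a

lemma dot_vanish_span {m : ℕ} (w : Fin m → ℝ) (s : Set (Fin m → ℝ))
    (h : ∀ x ∈ s, w ⬝ᵥ x = 0) : ∀ x ∈ Submodule.span ℝ s, w ⬝ᵥ x = 0 := by
  intro x hx
  have hle : Submodule.span ℝ s ≤ LinearMap.ker (dotR w) :=
    Submodule.span_le.mpr fun y hy => LinearMap.mem_ker.mpr (h y hy)
  exact hle hx

/-- left-argument linear dot map -/
noncomputable def dotL {m : ℕ} (x : Fin m → ℝ) : (Fin m → ℝ) →ₗ[ℝ] ℝ where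
  toFun w := w ⬝ᵥ x
  map_add' a b := add_dotProduct a b x
  map_smul' c a := smul_dotProduct c a x

lemma exists_dot_perp {m : ℕ} (s : Set (Fin m → ℝ)) (hs : s.Finite)
    (n : Fin m → ℝ)
    (hr : Module.finrank ℝ (Submodule.span ℝ s) + 1 < m) :
    ∃ w : Fin m → ℝ, (∀ x ∈ Submodule.span ℝ s, w ⬝ᵥ x = 0) ∧ w ∉ Submodule.span ℝ {n} := by
  obtain ⟨t, hts, htspan, htind⟩ := exists_linearIndependent ℝ s
  have htfin : t.Finite := hs.subset hts
  haveI : Fintype t := htfin.fintype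
  let f : (Fin m → ℝ) →ₗ[ℝ] (t → ℝ) := LinearMap.pi (fun x => dotL (x : Fin m → ℝ))
  have hcard : t.toFinset.card = Module.finrank ℝ (Submodule.span ℝ s) := by
    rw [← htspan]; exact (finrank_span_set_eq_card htind).symm
  have hrange : Module.finrank ℝ (LinearMap.range f) ≤ t.toFinset.card := by
    have h1 := Submodule.finrank_le (LinearMap.range f)
    rw [Module.finrank_pi] at h1; rwa [Set.toFinset_card]
  have hrn := LinearMap.finrank_range_add_finrank_ker f
  rw [Module.finrank_fin_fun] at hrn
  by_contra hcon
  push_neg at hcon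
  have hker_le : LinearMap.ker f ≤ Submodule.span ℝ {n} := by
    intro w hw
    apply hcon
    intro x hx
    have hvan : ∀ y ∈ t, w ⬝ᵥ y = 0 := fun y hy =>
      congrFun (LinearMap.mem_ker.mp hw) ⟨y, hy⟩
    exact dot_vanish_span w t hvan x (by rwa [htspan])
  have h1 : Module.finrank ℝ (LinearMap.ker f) ≤ 1 := by
    refine le_trans (Submodule.finrank_mono hker_le) ?_
    have := finrank_span_le_card (R := ℝ) ({n} : Set (Fin m → ℝ))
    simpa using this
  omega

lemma rank_step {m K : ℕ} (v : Fin K → Fin m → ℝ)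
    (hspan : Submodule.span ℝ (Set.range v) = ⊤)
    (n : Fin m → ℝ) (hD : ∀ k, n ⬝ᵥ v k ≤ 0)
    (hr : Module.finrank ℝ (Submodule.span ℝ (v '' {k | n ⬝ᵥ v k = 0})) + 1 < m) :
    ∃ n' : Fin m → ℝ, n' ≠ 0 ∧ (∀ k, n' ⬝ᵥ v k ≤ 0) ∧
      Module.finrank ℝ (Submodule.span ℝ (v '' {k | n ⬝ᵥ v k = 0})) <
      Module.finrank ℝ (Submodule.span ℝ (v '' {k | n' ⬝ᵥ v k = 0})) := by
  set A : Set (Fin K) := {k | n ⬝ᵥ v k = 0} with hA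
  set W : Submodule ℝ (Fin m → ℝ) := Submodule.span ℝ (v '' A) with hW
  have hfinA : (v '' A).Finite := (Set.toFinite A).image v
  obtain ⟨w₀, hw₀W, hw₀n⟩ := exists_dot_perp (v '' A) hfinA n hr
  have hW₀ : ∀ x ∈ W, w₀ ⬝ᵥ x = 0 := hw₀W
  have hEither : ∃ w : Fin m → ℝ, (∀ x ∈ W, w ⬝ᵥ x = 0) ∧ w ∉ Submodule.span ℝ {n} ∧
      ∃ k, 0 < w ⬝ᵥ v k := by
    by_cases h1 : ∃ k, 0 < w₀ ⬝ᵥ v k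
    · exact ⟨w₀, hW₀, hw₀n, h1⟩
    by_cases h2 : ∃ k, 0 < (-w₀) ⬝ᵥ v k
    · refine ⟨-w₀, fun x hx => ?_, fun hmem => hw₀n ?_, h2⟩
      · rw [neg_dotProduct, hW₀ x hx, neg_zero]
      · simpa using Submodule.neg_mem _ hmem
    · exfalso
      push_neg at h1 h2
      have hz : ∀ k, w₀ ⬝ᵥ v k = 0 := by
        intro k
        have ha := h1 k
        have hb := h2 k
        rw [neg_dotProduct] at hb
        linarith
      have hzall : ∀ x ∈ Submodule.span ℝ (Set.range v), w₀ ⬝ᵥ x = 0 :=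
        dot_vanish_span w₀ _ (by rintro x ⟨k, rfl⟩; exact hz k)
      have : w₀ ⬝ᵥ w₀ = 0 := hzall w₀ (by rw [hspan]; trivial)
      have hw0 : w₀ = 0 := dotProduct_self_eq_zero.mp this
      exact hw₀n (hw0 ▸ Submodule.zero_mem _)
  obtain ⟨w, hwW, hwn, k₀, hk₀⟩ := hEither
  set P : Finset (Fin K) := Finset.univ.filter (fun k => 0 < w ⬝ᵥ v k) with hP
  have hPne : P.Nonempty := ⟨k₀, by simp [hP, hk₀]⟩
  set τ : ℝ := P.inf' hPne (fun k => -(n ⬝ᵥ v k)/(w ⬝ᵥ v k)) with hτ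
  have hwA : ∀ k ∈ A, w ⬝ᵥ v k = 0 := fun k hk =>
    hwW _ (Submodule.subset_span ⟨k, hk, rfl⟩)
  have hτpos : 0 < τ := by
    rw [hτ, Finset.lt_inf'_iff]
    intro k hk
    have hwk : 0 < w ⬝ᵥ v k := (Finset.mem_filter.mp hk).2
    have hnk : n ⬝ᵥ v k < 0 := by
      rcases (hD k).lt_or_eq with h | h
      · exact h
      · exact absurd (hwA k h) (by linarith)
    exact div_pos (by linarith) hwk
  obtain ⟨k₁, hk₁P, hk₁eq⟩ := Finset.exists_mem_eq_inf' hPne (fun k => -(n ⬝ᵥ v k)/(w ⬝ᵥ v k))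
  have hwk₁ : 0 < w ⬝ᵥ v k₁ := (Finset.mem_filter.mp hk₁P).2
  refine ⟨n + τ • w, ?_, ?_, ?_⟩
  · intro h0
    apply hwn
    have hw_eq : w = (-τ⁻¹) • n := by
      have h1 : τ • w = -n := by
        have := congrArg (fun x => x - n) h0
        simpa [add_sub_cancel_left] using this
      have h2 : w = τ⁻¹ • (-n) := by
        rw [← h1, smul_smul, inv_mul_cancel₀ hτpos.ne', one_smul]
      rw [h2, smul_neg, ← neg_smul]
    rw [hw_eq]
    exact Submodule.smul_mem _ _ (Submodule.mem_span_singleton_self n)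
  · intro k
    rw [add_dotProduct, smul_dotProduct, smul_eq_mul]
    by_cases hk : 0 < w ⬝ᵥ v k
    · have hkP : k ∈ P := by simp [hP, hk]
      have hτle : τ ≤ -(n ⬝ᵥ v k)/(w ⬝ᵥ v k) := by rw [hτ]; exact Finset.inf'_le _ hkP
      have := (le_div_iff₀ hk).mp hτle
      linarith
    · push_neg at hk
      nlinarith [hD k, hτpos.le]
  · have hAsub : A ⊆ {k | (n + τ • w) ⬝ᵥ v k = 0} := by
      intro k hk
      have h1 : n ⬝ᵥ v k = 0 := hk
      have h2 : w ⬝ᵥ v k = 0 := hwA k hk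
      simp [add_dotProduct, smul_dotProduct, h1, h2]
    have hk₁mem : k₁ ∈ {k | (n + τ • w) ⬝ᵥ v k = 0} := by
      have : (n + τ • w) ⬝ᵥ v k₁ = n ⬝ᵥ v k₁ + τ * (w ⬝ᵥ v k₁) := by
        rw [add_dotProduct, smul_dotProduct, smul_eq_mul]
      rw [Set.mem_setOf_eq, this, hτ, hk₁eq, div_mul_cancel₀ _ hwk₁.ne']
      ring
    have hvk₁ : v k₁ ∉ W := fun hmem => absurd (hwW _ hmem) (by linarith)
    apply Submodule.finrank_lt_finrank_of_lt
    exact SetLike.lt_iff_le_and_exists.2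
      ⟨Submodule.span_mono (Set.image_mono hAsub),
       v k₁, Submodule.subset_span ⟨k₁, hk₁mem, rfl⟩, hvk₁⟩

lemma rank_lt_of_ne_zero {m K : ℕ} (v : Fin K → Fin m → ℝ) (n : Fin m → ℝ) (hn : n ≠ 0) :
    Module.finrank ℝ (Submodule.span ℝ (v '' {k | n ⬝ᵥ v k = 0})) < m := by
  set W := Submodule.span ℝ (v '' {k | n ⬝ᵥ v k = 0}) with hW
  have hle : Module.finrank ℝ W ≤ m := by
    have := Submodule.finrank_le W
    rwa [Module.finrank_fin_fun] at this
  rcases hle.lt_or_eq with h | h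
  · exact h
  · exfalso
    have htop : W = ⊤ := by
      apply Submodule.eq_top_of_finrank_eq
      rw [h, Module.finrank_fin_fun]
    have hvan : ∀ x ∈ W, n ⬝ᵥ x = 0 := by
      apply dot_vanish_span
      rintro x ⟨k, hk, rfl⟩
      exact hk
    have : n ⬝ᵥ n = 0 := hvan n (htop ▸ Submodule.mem_top)
    exact hn (dotProduct_self_eq_zero.mp this)

lemma exists_facet_normal {m K : ℕ} (v : Fin K → Fin m → ℝ)
    (hspan : Submodule.span ℝ (Set.range v) = ⊤)
    (n₀ : Fin m → ℝ) (hn₀ : n₀ ≠ 0) (hD₀ : ∀ k, n₀ ⬝ᵥ v k ≤ 0) :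
    ∃ n : Fin m → ℝ, n ≠ 0 ∧ (∀ k, n ⬝ᵥ v k ≤ 0) ∧
      Module.finrank ℝ (Submodule.span ℝ (v '' {k | n ⬝ᵥ v k = 0})) + 1 = m := by
  have key : ∀ j : ℕ, ∀ n : Fin m → ℝ, n ≠ 0 → (∀ k, n ⬝ᵥ v k ≤ 0) →
      m ≤ Module.finrank ℝ (Submodule.span ℝ (v '' {k | n ⬝ᵥ v k = 0})) + 1 + j →
      ∃ n' : Fin m → ℝ, n' ≠ 0 ∧ (∀ k, n' ⬝ᵥ v k ≤ 0) ∧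
        Module.finrank ℝ (Submodule.span ℝ (v '' {k | n' ⬝ᵥ v k = 0})) + 1 = m := by
    intro j
    induction j with
    | zero =>
      intro n hn hD hle
      exact ⟨n, hn, hD, by have := rank_lt_of_ne_zero v n hn; omega⟩
    | succ j ih =>
      intro n hn hD hle
      by_cases h : Module.finrank ℝ (Submodule.span ℝ (v '' {k | n ⬝ᵥ v k = 0})) + 1 < m
      · obtain ⟨n', hn', hD', hlt⟩ := rank_step v hspan n hD h
        exact ih n' hn' hD' (by omega)
      · exact ⟨n, hn, hD, by have := rank_lt_of_ne_zero v n hn; omega⟩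
  exact key m n₀ hn₀ hD₀ (by omega)

lemma exists_facet_finset {m K : ℕ} (v : Fin K → Fin m → ℝ) (n : Fin m → ℝ)
    (hr : Module.finrank ℝ (Submodule.span ℝ (v '' {k | n ⬝ᵥ v k = 0})) + 1 = m) :
    ∃ s : Finset (Fin K), s.card = m - 1 ∧
      LinearIndependent ℝ (fun k : {k // k ∈ s} => v k) ∧
      ∀ k ∈ s, n ⬝ᵥ v k = 0 := by
  set A : Set (Fin K) := {k | n ⬝ᵥ v k = 0} with hA
  obtain ⟨t, hts, htspan, htind⟩ := exists_linearIndependent ℝ (v '' A)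
  have htfin : t.Finite := ((Set.toFinite A).image v).subset hts
  haveI : Fintype t := htfin.fintype
  have hcard : t.toFinset.card = m - 1 := by
    have h1 := finrank_span_set_eq_card htind
    rw [htspan] at h1
    omega
  have hchoice : ∀ x : t, ∃ k, k ∈ A ∧ v k = x := fun x => hts x.2
  choose g hgA hgv using hchoice
  have hginj : Function.Injective g := by
    intro x y hxy
    exact Subtype.ext (by rw [← hgv x, ← hgv y, hxy])
  refine ⟨Finset.univ.image g, ?_, ?_, ?_⟩
  · rw [Finset.card_image_of_injective _ hginj, Finset.card_univ, ← Set.toFinset_card, hcard]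
  · have hmem : ∀ k : {k // k ∈ Finset.univ.image g}, (v k : Fin m → ℝ) ∈ t := by
      rintro ⟨k, hk⟩
      obtain ⟨x, -, rfl⟩ := Finset.mem_image.mp hk
      rw [hgv x]
      exact x.2
    have heq : (fun k : {k // k ∈ Finset.univ.image g} => v k) =
        (fun x : t => (x : Fin m → ℝ)) ∘ (fun k : {k // k ∈ Finset.univ.image g} => (⟨v k, hmem k⟩ : t)) := rfl
    rw [heq]
    apply htind.comp
    rintro ⟨ka, hka⟩ ⟨kb, hkb⟩ hab
    obtain ⟨x, -, rfl⟩ := Finset.mem_image.mp hka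
    obtain ⟨y, -, rfl⟩ := Finset.mem_image.mp hkb
    have hv : v (g x) = v (g y) := congrArg Subtype.val hab
    rw [hgv x, hgv y] at hv
    have hxy : x = y := Subtype.ext hv
    exact Subtype.ext (congrArg g hxy)
  · intro k hk
    obtain ⟨x, -, rfl⟩ := Finset.mem_image.mp hk
    exact hgA x

/-- For a finite family `v` spanning `ℝ^m`, the conical hull of the `v k` is all of `ℝ^m` iff
for every nonzero normal vector `n` of a hyperplane spanned by `m - 1` linearly independent
vectors among the `v k`, the numbers `⟪n, v k⟫` are neither all nonpositive nor all
nonnegative. -/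
theorem stmt_11 {m K : ℕ} (v : Fin K → Fin m → ℝ)
    (hspan : Submodule.span ℝ (Set.range v) = ⊤) :
    (∀ u : Fin m → ℝ, ∃ c : Fin K → ℝ, (∀ k, 0 ≤ c k) ∧ u = ∑ k, c k • v k) ↔
    (∀ n : Fin m → ℝ, n ≠ 0 →
      (∃ s : Finset (Fin K), s.card = m - 1 ∧
        LinearIndependent ℝ (fun k : {k // k ∈ s} => v k) ∧
        ∀ k ∈ s, dotProduct n (v k) = 0) →
      (∃ k₁, 0 < dotProduct n (v k₁)) ∧
      (∃ k₂, dotProduct n (v k₂) < 0)) := by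
  constructor
  · intro h n hn0 _
    have hnn : 0 < n ⬝ᵥ n := by
      have h0 : 0 ≤ n ⬝ᵥ n := Finset.sum_nonneg fun _ _ => mul_self_nonneg _
      rcases h0.lt_or_eq with h' | h'
      · exact h'
      · exact absurd (dotProduct_self_eq_zero.mp h'.symm) hn0
    have hdot : ∀ c : Fin K → ℝ, n ⬝ᵥ (∑ k, c k • v k) = ∑ k, c k * (n ⬝ᵥ v k) := by
      intro c
      show (dotR n) (∑ k, c k • v k) = _
      rw [map_sum (dotR n)]
      congr 1
      funext k
      show n ⬝ᵥ (c k • v k) = _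
      rw [dotProduct_smul, smul_eq_mul]
    constructor
    · obtain ⟨c, hc, hcu⟩ := h n
      by_contra hcon
      push_neg at hcon
      have h1 := hdot c
      rw [← hcu] at h1
      have h2 : ∑ k, c k * (n ⬝ᵥ v k) ≤ 0 :=
        Finset.sum_nonpos fun k _ => mul_nonpos_of_nonneg_of_nonpos (hc k) (hcon k)
      linarith
    · obtain ⟨c, hc, hcu⟩ := h (-n)
      by_contra hcon
      push_neg at hcon
      have h1 : n ⬝ᵥ (-n) = ∑ k, c k * (n ⬝ᵥ v k) := by rw [hcu, hdot]
      rw [dotProduct_neg] at h1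
      have h2 : 0 ≤ ∑ k, c k * (n ⬝ᵥ v k) :=
        Finset.sum_nonneg fun k _ => mul_nonneg (hc k) (hcon k)
      linarith
  · intro hyp u
    rcases farkas_aux K v u with h | ⟨n, hD, hnu⟩
    · exact h
    · exfalso
      have hn0 : n ≠ 0 := by
        rintro rfl
        rw [zero_dotProduct] at hnu
        exact lt_irrefl 0 hnu
      obtain ⟨n', hn'0, hD', hr⟩ := exists_facet_normal v hspan n hn0 hD
      obtain ⟨s, hs1, hs2, hs3⟩ := exists_facet_finset v n' hr
      obtain ⟨⟨k₁, hk₁⟩, -⟩ := hyp n' hn'0 ⟨s, hs1, hs2, hs3⟩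
      exact absurd (hD' k₁) (not_le.mpr hk₁)
end

section
/- Let ℛ be a linear map on N×N complex matrices, and let H, ρ, U, Λ : ℝ → Matrix(Fin N, Fin N, ℂ) be functions such that: Λ(t) is a diagonal matrix for every t; U(t) is unitary for every t; ρ(t) = U(t)·Λ(t)·U(t)† for every t; U and Λ are differentiable; there exists a Hermitian-valued function H'(t) with U'(t) = −i·H'(t)·U(t); H(t) is Hermitian for every t; and ρ satisfies the Lindblad-type equation ρ'(t) = −i·(H(t)·ρ(t) − ρ(t)·H(t)) + ℛ(ρ(t)) for every t. Then for all t and all indices k, the diagonal entries of the derivative of Λ satisfy (Λ'(t))_{kk} = (U(t)† · ℛ(U(t)·Λ(t)·U(t)†) · U(t))_{kk}; i.e. Λ'(t) equals the diagonal part of U(t)† · ℛ(ρ(t)) · U(t). -/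
open Matrix

lemma mul_diag_kk {N : ℕ} {Λ M : Matrix (Fin N) (Fin N) ℂ} (hd : Λ.IsDiag) (k : Fin N) :
    (M * Λ) k k = M k k * Λ k k := by
  rw [Matrix.mul_apply]
  exact Finset.sum_eq_single k (fun b _ hb => by rw [hd hb, mul_zero]) (by simp)

lemma diag_mul_kk {N : ℕ} {Λ M : Matrix (Fin N) (Fin N) ℂ} (hd : Λ.IsDiag) (k : Fin N) :
    (Λ * M) k k = Λ k k * M k k := by
  rw [Matrix.mul_apply]
  exact Finset.sum_eq_single k (fun b hb hbk => by rw [hd (Ne.symm hbk), zero_mul]) (by simp)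

/-- Diagonalization of the Lindblad dynamics: if `ρ(t) = U(t) Λ(t) U(t)†` with `Λ(t)`
diagonal, `U(t)` unitary with Hermitian generator `H'(t)` (i.e. `U' = -i H' U`), `H(t)`
Hermitian, and `ρ' = -i[H, ρ] + ℛ(ρ)`, then the diagonal entries of `Λ'` are the diagonal
entries of `U† ℛ(U Λ U†) U`. -/
theorem stmt_14 {N : ℕ}
    (ℛ : Matrix (Fin N) (Fin N) ℂ →ₗ[ℂ] Matrix (Fin N) (Fin N) ℂ)
    (H ρ U Λ Λ' H' : ℝ → Matrix (Fin N) (Fin N) ℂ)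
    (hdiag : ∀ t, (Λ t).IsDiag)
    (huni : ∀ t, U t * (U t)ᴴ = 1 ∧ (U t)ᴴ * U t = 1)
    (hρ : ∀ t, ρ t = U t * Λ t * (U t)ᴴ)
    (hH' : ∀ t, (H' t)ᴴ = H' t)
    (hU' : ∀ t i j, HasDerivAt (fun s => U s i j)
      (((-Complex.I) • (H' t * U t)) i j) t)
    (hΛ' : ∀ t i j, HasDerivAt (fun s => Λ s i j) (Λ' t i j) t)
    (hH : ∀ t, (H t)ᴴ = H t)
    (hLind : ∀ t i j, HasDerivAt (fun s => ρ s i j)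
      (((-Complex.I) • (H t * ρ t - ρ t * H t) + ℛ (ρ t)) i j) t) :
    ∀ t k, Λ' t k k = ((U t)ᴴ * ℛ (U t * Λ t * (U t)ᴴ) * U t) k k := by
  intro t k
  set A := U t with hA
  set D : Matrix (Fin N) (Fin N) ℂ := (-Complex.I) • (H' t * U t) with hD
  -- derivative of the triple product, entrywise
  have hprod : ∀ i j, HasDerivAt (fun s => (U s * Λ s * (U s)ᴴ) i j)
      ((D * Λ t * Aᴴ + A * Λ' t * Aᴴ + A * Λ t * Dᴴ) i j) t := by
    intro i j
    have key : HasDerivAt (fun s => ∑ b, (∑ a, U s i a * Λ s a b) * star (U s j b))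
        (∑ b, ((∑ a, (D i a * Λ t a b + U t i a * Λ' t a b)) * star (U t j b)
          + (∑ a, U t i a * Λ t a b) * star (D j b))) t := by
      apply HasDerivAt.fun_sum
      intro b _
      exact (HasDerivAt.fun_sum fun a _ => (hU' t i a).mul (hΛ' t a b)).mul (hU' t j b).star
    have hfun : (fun s => (U s * Λ s * (U s)ᴴ) i j)
        = fun s => ∑ b, (∑ a, U s i a * Λ s a b) * star (U s j b) := by
      funext s
      simp [Matrix.mul_apply, Matrix.conjTranspose_apply]
    rw [hfun]
    convert key using 1
    simp [Matrix.mul_apply, Matrix.conjTranspose_apply, Matrix.add_apply,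
      Finset.sum_add_distrib, add_mul, Finset.sum_mul, hA]
  -- uniqueness of derivatives: matrix identity
  have hmat : (-Complex.I) • (H t * ρ t - ρ t * H t) + ℛ (ρ t)
      = D * Λ t * Aᴴ + A * Λ' t * Aᴴ + A * Λ t * Dᴴ := by
    ext i j
    refine (hLind t i j).unique ?_
    have hfun : (fun s => ρ s i j) = fun s => (U s * Λ s * (U s)ᴴ) i j := by
      funext s; rw [hρ]
    rw [hfun]
    exact hprod i j
  have hc : ∀ X : Matrix (Fin N) (Fin N) ℂ, Aᴴ * (A * X) = X := fun X => by
    rw [← Matrix.mul_assoc, (huni t).2, Matrix.one_mul]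
  have e := congrArg (fun M => Aᴴ * M * A) hmat
  simp only [Matrix.mul_add, Matrix.add_mul, Matrix.mul_assoc, hc, (show Aᴴ * A = 1 from (huni t).2),
    Matrix.mul_one] at e
  set M : Matrix (Fin N) (Fin N) ℂ := Aᴴ * H t * A with hM
  set K : Matrix (Fin N) (Fin N) ℂ := Aᴴ * H' t * A with hK
  have eL : Aᴴ * (-Complex.I • (H t * ρ t - ρ t * H t) * A) + Aᴴ * (ℛ (ρ t) * A)
      = (-Complex.I) • (M * Λ t - Λ t * M) + Aᴴ * ℛ (A * Λ t * Aᴴ) * A := by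
    rw [hρ, ← hA]
    simp [Matrix.mul_sub, Matrix.sub_mul, Matrix.mul_smul, Matrix.smul_mul,
      Matrix.mul_assoc, hc, (show Aᴴ * A = 1 from (huni t).2), Matrix.mul_one, hM]
  have eR : Aᴴ * (D * Λ t) + Λ' t + Λ t * (Dᴴ * A)
      = (-Complex.I) • (K * Λ t) + Λ' t + Complex.I • (Λ t * K) := by
    rw [hD, ← hA]
    simp [Matrix.conjTranspose_smul, Matrix.conjTranspose_mul, hH', Matrix.mul_smul,
      Matrix.smul_mul, Matrix.mul_assoc, hK, Complex.star_def, Complex.conj_I,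
      Complex.conj_neg_I]
  rw [eL, eR] at e
  have ekk := congrArg (fun X => X k k) e
  simp only [Matrix.add_apply, Matrix.sub_apply, Matrix.smul_apply, smul_eq_mul,
    mul_diag_kk (hdiag t) k, diag_mul_kk (hdiag t) k] at ekk
  rw [hρ] at *
  linear_combination -ekk
end
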